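/- Let s ∈ (0,1), N > 2s, and for α ∈ (0, (N-2s)/2) define λ(α) = 2^{2s} · [Γ((N+2s+2α)/4) Γ((N+2s-2α)/4)] / [Γ((N-2s-2α)/4) Γ((N-2s+2α)/4)]. Then α ↦ λ(α) is strictly decreasing on (0, (N-2s)/2). -/

import Mathlib

open Real Set
open Real Set Filter Finset Topology Nat

/-- Partial-product building block of `Real.GammaSeq`. -/
noncomputable def Fprod (u : ℝ) (n : ℕ) : ℝ := ∏ j ∈ Finset.range (n + 1), (u + j)

lemma Fprod_pos {u : ℝ} (hu : 0 < u) (n : ℕ) : 0 < Fprod u n :=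
  Finset.prod_pos fun j _ => by positivity

lemma gammaSeq_eq (u : ℝ) (n : ℕ) :
    Real.GammaSeq u n = (n : ℝ) ^ u * n ! / Fprod u n := rfl

/-- The key strict inequality for products of Gamma values. -/
lemma gamma_key {a b x y : ℝ} (hb : 0 < b) (hba : b < a) (hx : 0 ≤ x)
    (hxy : x < y) (hyb : y < b) :
    Real.Gamma (b + x) * Real.Gamma (b - x) * (Real.Gamma (a + y) * Real.Gamma (a - y)) <
    Real.Gamma (a + x) * Real.Gamma (a - x) * (Real.Gamma (b + y) * Real.Gamma (b - y)) := by
  have ha : 0 < a := hb.trans hba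
  have hax : 0 < a + x := by linarith
  have hax' : 0 < a - x := by linarith
  have hay : 0 < a + y := by linarith
  have hay' : 0 < a - y := by linarith
  have hbx : 0 < b + x := by linarith
  have hbx' : 0 < b - x := by linarith
  have hby : 0 < b + y := by linarith
  have hby' : 0 < b - y := by linarith
  -- the factor sequence
  set r : ℕ → ℝ := fun j =>
    (b + x + j) * (b - x + j) * ((a + y + j) * (a - y + j)) /
      ((a + x + j) * (a - x + j) * ((b + y + j) * (b - y + j))) with hr
  have hr1 : ∀ j : ℕ, 1 < r j := by
    intro j
    have hj : (0:ℝ) ≤ (j:ℝ) := Nat.cast_nonneg j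
    have hden : 0 < (a + x + j) * (a - x + j) * ((b + y + j) * (b - y + j)) := by positivity
    rw [hr, lt_div_iff₀ hden]
    have hfac : 0 < ((a + j) - (b + j)) * ((a + j) + (b + j)) * ((y - x) * (y + x)) := by
      apply mul_pos
      · apply mul_pos <;> nlinarith
      · apply mul_pos <;> nlinarith
    nlinarith [hfac]
  set P : ℕ → ℝ := fun n =>
    Fprod (b + x) n * Fprod (b - x) n * (Fprod (a + y) n * Fprod (a - y) n) /
      (Fprod (a + x) n * Fprod (a - x) n * (Fprod (b + y) n * Fprod (b - y) n)) with hP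
  have hPprod : ∀ n : ℕ, P n = ∏ j ∈ Finset.range (n + 1), r j := by
    intro n
    rw [hP]
    simp only [Fprod, hr, ← Finset.prod_mul_distrib, ← Finset.prod_div_distrib]
  have hQden : 0 < Real.Gamma (b + x) * Real.Gamma (b - x) *
      (Real.Gamma (a + y) * Real.Gamma (a - y)) := by
    have := Real.Gamma_pos_of_pos hbx
    have := Real.Gamma_pos_of_pos hbx'
    have := Real.Gamma_pos_of_pos hay
    have := Real.Gamma_pos_of_pos hay'
    positivity
  -- Tendsto of the GammaSeq ratio
  have hT : Tendsto (fun n => Real.GammaSeq (a + x) n * Real.GammaSeq (a - x) n *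
      (Real.GammaSeq (b + y) n * Real.GammaSeq (b - y) n) /
      (Real.GammaSeq (b + x) n * Real.GammaSeq (b - x) n *
        (Real.GammaSeq (a + y) n * Real.GammaSeq (a - y) n))) atTop
      (𝓝 (Real.Gamma (a + x) * Real.Gamma (a - x) *
        (Real.Gamma (b + y) * Real.Gamma (b - y)) /
        (Real.Gamma (b + x) * Real.Gamma (b - x) *
          (Real.Gamma (a + y) * Real.Gamma (a - y))))) := by
    exact (((Real.GammaSeq_tendsto_Gamma (a + x)).mul
      (Real.GammaSeq_tendsto_Gamma (a - x))).mul
      ((Real.GammaSeq_tendsto_Gamma (b + y)).mul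
        (Real.GammaSeq_tendsto_Gamma (b - y)))).div
      ((((Real.GammaSeq_tendsto_Gamma (b + x)).mul
        (Real.GammaSeq_tendsto_Gamma (b - x))).mul
        ((Real.GammaSeq_tendsto_Gamma (a + y)).mul
          (Real.GammaSeq_tendsto_Gamma (a - y))))) hQden.ne'
  have hEq : ∀ᶠ n in atTop, Real.GammaSeq (a + x) n * Real.GammaSeq (a - x) n *
      (Real.GammaSeq (b + y) n * Real.GammaSeq (b - y) n) /
      (Real.GammaSeq (b + x) n * Real.GammaSeq (b - x) n *
        (Real.GammaSeq (a + y) n * Real.GammaSeq (a - y) n)) = P n := by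
    filter_upwards [eventually_ge_atTop 1] with n hn
    have hn0 : (0:ℝ) < n := by exact_mod_cast hn
    have hfact : (0:ℝ) < (n ! : ℝ) := by positivity
    simp only [gammaSeq_eq, hP]
    rw [Real.rpow_add hn0 b x, Real.rpow_sub hn0 b x, Real.rpow_add hn0 a y,
      Real.rpow_sub hn0 a y, Real.rpow_add hn0 a x, Real.rpow_sub hn0 a x,
      Real.rpow_add hn0 b y, Real.rpow_sub hn0 b y]
    have h1 := (Fprod_pos hax n).ne'
    have h2 := (Fprod_pos hax' n).ne'
    have h3 := (Fprod_pos hay n).ne'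
    have h4 := (Fprod_pos hay' n).ne'
    have h5 := (Fprod_pos hbx n).ne'
    have h6 := (Fprod_pos hbx' n).ne'
    have h7 := (Fprod_pos hby n).ne'
    have h8 := (Fprod_pos hby' n).ne'
    have hna := (Real.rpow_pos_of_pos hn0 a).ne'
    have hnb := (Real.rpow_pos_of_pos hn0 b).ne'
    have hnx := (Real.rpow_pos_of_pos hn0 x).ne'
    have hny := (Real.rpow_pos_of_pos hn0 y).ne'
    field_simp
  have hTP : Tendsto P atTop (𝓝 (Real.Gamma (a + x) * Real.Gamma (a - x) *
      (Real.Gamma (b + y) * Real.Gamma (b - y)) /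
      (Real.Gamma (b + x) * Real.Gamma (b - x) *
        (Real.Gamma (a + y) * Real.Gamma (a - y))))) := hT.congr' hEq
  have hlb : ∀ n : ℕ, r 0 ≤ P n := by
    intro n
    rw [hPprod]
    calc r 0 = (∏ j ∈ Finset.range n, (1:ℝ)) * r 0 := by simp
    _ ≤ (∏ j ∈ Finset.range n, r (j + 1)) * r 0 := by
        apply mul_le_mul_of_nonneg_right
        · apply Finset.prod_le_prod (fun _ _ => zero_le_one)
          exact fun j _ => (hr1 (j + 1)).le
        · exact le_of_lt (lt_trans one_pos (hr1 0))
    _ = ∏ j ∈ Finset.range (n + 1), r j := (Finset.prod_range_succ' r n).symm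
  have hQ : r 0 ≤ Real.Gamma (a + x) * Real.Gamma (a - x) *
      (Real.Gamma (b + y) * Real.Gamma (b - y)) /
      (Real.Gamma (b + x) * Real.Gamma (b - x) *
        (Real.Gamma (a + y) * Real.Gamma (a - y))) :=
    ge_of_tendsto' hTP hlb
  have h1Q : 1 < Real.Gamma (a + x) * Real.Gamma (a - x) *
      (Real.Gamma (b + y) * Real.Gamma (b - y)) /
      (Real.Gamma (b + x) * Real.Gamma (b - x) *
        (Real.Gamma (a + y) * Real.Gamma (a - y))) := lt_of_lt_of_le (hr1 0) hQ
  rw [lt_div_iff₀ hQden, one_mul] at h1Q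
  exact h1Q

/-- The coupling constant `λ(α)` of Hardy-type fractional operators. -/
noncomputable def lamCoupling (N : ℕ) (s α : ℝ) : ℝ :=
  2 ^ (2 * s) *
    (Real.Gamma ((N + 2 * s + 2 * α) / 4) * Real.Gamma ((N + 2 * s - 2 * α) / 4)) /
    (Real.Gamma ((N - 2 * s - 2 * α) / 4) * Real.Gamma ((N - 2 * s + 2 * α) / 4))

/-- For `s ∈ (0,1)` and `N > 2s`, the map `α ↦ λ(α)` is strictly decreasing on
`(0, (N-2s)/2)`. -/
theorem lamCoupling_strictAntiOn (N : ℕ) (s : ℝ) (hs : s ∈ Ioo (0:ℝ) 1)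
    (hN : 2 * s < N) :
    StrictAntiOn (lamCoupling N s) (Ioo 0 ((N - 2 * s) / 2)) := by
  intro x hx y hy hxy
  set a : ℝ := ((N : ℝ) + 2 * s) / 4 with ha
  set b : ℝ := ((N : ℝ) - 2 * s) / 4 with hb
  have hb0 : 0 < b := by rw [hb]; linarith
  have hba : b < a := by rw [ha, hb]; linarith [hs.1]
  have hx2 : (0:ℝ) ≤ x / 2 := by linarith [hx.1]
  have hxy2 : x / 2 < y / 2 := by linarith
  have hyb : y / 2 < b := by
    have := hy.2
    rw [hb]; linarith
  have key := gamma_key hb0 hba hx2 hxy2 hyb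
  have e1 : ∀ α : ℝ, lamCoupling N s α =
      2 ^ (2 * s) * (Real.Gamma (a + α / 2) * Real.Gamma (a - α / 2)) /
        (Real.Gamma (b - α / 2) * Real.Gamma (b + α / 2)) := by
    intro α
    rw [lamCoupling, ha, hb]
    norm_num
    ring_nf
  have hbx' : 0 < b - x / 2 := by linarith
  have hbx : 0 < b + x / 2 := by linarith
  have hby' : 0 < b - y / 2 := by linarith
  have hby : 0 < b + y / 2 := by linarith
  have hDx : 0 < Real.Gamma (b - x / 2) * Real.Gamma (b + x / 2) :=
    mul_pos (Real.Gamma_pos_of_pos hbx') (Real.Gamma_pos_of_pos hbx)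
  have hDy : 0 < Real.Gamma (b - y / 2) * Real.Gamma (b + y / 2) :=
    mul_pos (Real.Gamma_pos_of_pos hby') (Real.Gamma_pos_of_pos hby)
  have h2 : (0:ℝ) < 2 ^ (2 * s) := Real.rpow_pos_of_pos two_pos _
  rw [e1 x, e1 y, div_lt_div_iff₀ hDy hDx]
  nlinarith [mul_lt_mul_of_pos_left key h2]
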